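/- Let g₁ : ℝ → ℝ and h₁ : ℝ → ℝ be differentiable, and let g₂, h₂ : 𝒮 → ℝ where 𝒮 = {s₁, s₂} with s₁ ≠ s₂. Let f_θ : ℝ → 𝒮 be given by f_θ(x) = s₁ for x < t and f_θ(x) = s₂ for x ≥ t (a threshold classifier). Assume g₁(x) + g₂(f_θ(x)) = h₁(x) + h₂(f_θ(x)) for all x ∈ ℝ, and that g₁ − h₁ is continuous at the threshold t. Then there is a constant c such that h₁ = g₁ + c on all of ℝ and h₂(s) = g₂(s) − c for both s ∈ 𝒮. Consequently h₁(x) + h₂(ŷ) = g₁(x) + g₂(ŷ) for ALL (x, ŷ) ∈ ℝ × 𝒮, including the unobserved combinations. -/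
import Mathlib

/-- Threshold-classifier instantiation of identifiability from classification:
with binary predictions `s₁ ≠ s₂` produced by the threshold rule
`fθ x = if x < t then s₁ else s₂`, agreement of the separable hypothesis
`h₁ + h₂` with the mechanism `g₁ + g₂` on the observed support, together with
continuity of `g₁ - h₁` at the threshold, forces `h₁ = g₁ + c` and
`h₂ = g₂ - c` for a single constant `c`; hence `h₁ x + h₂ yh = g₁ x + g₂ yh`
for ALL pairs, including unobserved combinations. -/
theorem stmt_8 (g₁ h₁ : ℝ → ℝ) (hg₁ : Differentiable ℝ g₁)
    (hh₁ : Differentiable ℝ h₁) (g₂ h₂ : ℝ → ℝ) (s₁ s₂ t : ℝ) (hs : s₁ ≠ s₂)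
    (fθ : ℝ → ℝ) (hfθ : ∀ x : ℝ, fθ x = if x < t then s₁ else s₂)
    (hagree : ∀ x : ℝ, g₁ x + g₂ (fθ x) = h₁ x + h₂ (fθ x))
    (hcont : ContinuousAt (fun x => g₁ x - h₁ x) t) :
    ∃ c : ℝ, (∀ x : ℝ, h₁ x = g₁ x + c) ∧
      h₂ s₁ = g₂ s₁ - c ∧ h₂ s₂ = g₂ s₂ - c ∧
      ∀ x : ℝ, ∀ s ∈ ({s₁, s₂} : Set ℝ), h₁ x + h₂ s = g₁ x + g₂ s := by
  set c : ℝ := g₂ s₂ - h₂ s₂ with hc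
  set c₁ : ℝ := g₂ s₁ - h₂ s₁ with hc₁
  set D : ℝ → ℝ := fun x => g₁ x - h₁ x with hD
  have hDlt : ∀ x, x < t → D x = -c₁ := by
    intro x hx
    have h := hagree x
    rw [hfθ x, if_pos hx] at h
    simp only [hD, hc₁]; linarith
  have hDge : ∀ x, t ≤ x → D x = -c := by
    intro x hx
    have h := hagree x
    rw [hfθ x, if_neg (not_lt.mpr hx)] at h
    simp only [hD, hc]; linarith
  have h1 : Filter.Tendsto D (nhdsWithin t (Set.Iio t)) (nhds (-c₁)) := by
    have : ∀ x ∈ Set.Iio t, D x = -c₁ := fun x hx => hDlt x hx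
    exact Filter.Tendsto.congr' (by filter_upwards [self_mem_nhdsWithin] with x hx using (this x hx).symm)
      tendsto_const_nhds
  have h2 : Filter.Tendsto D (nhdsWithin t (Set.Iio t)) (nhds (-c)) := by
    have := hcont.continuousWithinAt (s := Set.Iio t)
    rw [ContinuousWithinAt, hDge t le_rfl] at this
    exact this
  have hcc : c₁ = c := by
    have := tendsto_nhds_unique h1 h2
    linarith
  refine ⟨c, ?_, ?_, ?_, ?_⟩
  · intro x
    rcases lt_or_ge x t with hx | hx
    · have := hDlt x hx; simp only [hD] at this; rw [hcc] at this; linarith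
    · have := hDge x hx; simp only [hD] at this; linarith
  · simp only [hc₁] at hcc; linarith
  · simp only [hc]; ring
  · intro x s hsmem
    have hx : h₁ x = g₁ x + c := by
      rcases lt_or_ge x t with hx | hx
      · have := hDlt x hx; simp only [hD] at this; rw [hcc] at this; linarith
      · have := hDge x hx; simp only [hD] at this; linarith
    rcases hsmem with rfl | hsm
    · have : h₂ s = g₂ s - c := by simp only [hc₁] at hcc; linarith
      rw [hx, this]; ring
    · rcases hsm with rfl
      have : h₂ s = g₂ s - c := by simp only [hc]; ring
      rw [hx, this]; ring
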